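/- Let u <_k w in the k-Bruhat order. A maximal chain u = u_0 <_k u_1 <_k ··· <_k u_n = w in the interval [u,w]_k equals the CM-chain of [u,w]_k if and only if the chain has no inversions. -/

import Mathlib

/-
Common definitions for "A Monoid for the universal k-Bruhat order"
(Bergeron–Sottile).

`S∞` is modeled as `Equiv.Perm ℕ+`; membership in `S∞` (finite support)
is the predicate `FinSupp`.
-/

noncomputable section

open scoped Classical

/-- `S∞`: permutations of the positive integers `{1,2,3,...}`. -/
abbrev Sinf : Type := Equiv.Perm ℕ+

/-- A permutation belongs to `S∞` iff it moves only finitely many points. -/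
def FinSupp (w : Sinf) : Prop := {i : ℕ+ | w i ≠ i}.Finite

/-- `ℓ(w)`: the number of inversions, i.e. pairs `i < j` with `w i > w j`. -/
def len (w : Sinf) : ℕ := {p : ℕ+ × ℕ+ | p.1 < p.2 ∧ w p.2 < w p.1}.ncard

/-- The cover relation of the `k`-Bruhat order: `w` covers `u` iff
`ℓ(w) = ℓ(u) + 1` and `w = u·(a b)` for some `a ≤ k < b`. -/
def kCover (k : ℕ+) (u w : Sinf) : Prop :=
  len w = len u + 1 ∧ ∃ a b : ℕ+, a ≤ k ∧ k < b ∧ w = u * Equiv.swap a b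

/-- The `k`-Bruhat order `≤ₖ`: the partial order generated by `kCover`. -/
def kBruhat (k : ℕ+) : Sinf → Sinf → Prop := Relation.ReflTransGen (kCover k)

/-- `ℓᵤ(ζ) = ℓ(ζu) − ℓ(u)` for any (some chosen) `u ∈ S∞`, `k` with `u ≤ₖ ζu`. -/
def ellU (ζ : Sinf) : ℕ :=
  if h : ∃ p : Sinf × ℕ+, FinSupp p.1 ∧ kBruhat p.2 p.1 (ζ * p.1) then
    len (ζ * h.choose.1) - len h.choose.1
  else 0

/-- `ℚ[S∞]` as a `ℚ`-vector space with basis the permutations. -/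
abbrev QS : Type := Sinf →₀ ℚ

/-- The operator `û_{αβ}` on `ℚ[S∞]`: on a basis permutation `ζ` it gives
`(α β)·ζ` if `ℓᵤ((α β)ζ) = ℓᵤ(ζ) + 1`, and `0` otherwise. -/
def uhat (α β : ℕ+) : QS →ₗ[ℚ] QS :=
  Finsupp.lsum ℚ (fun ζ : Sinf =>
    LinearMap.toSpanSingleton ℚ QS
      (if ellU (Equiv.swap α β * ζ) = ellU ζ + 1 then
        Finsupp.single (Equiv.swap α β * ζ) (1 : ℚ)
      else 0))

/-- Index type for the generators `u_{αβ}`, `0 < α < β`. -/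
abbrev Gen : Type := {p : ℕ+ × ℕ+ // p.1 < p.2}

/-- For `L = [(α₁,β₁),…,(αₙ,βₙ)]`, the composition `û_{αₙβₙ}∘⋯∘û_{α₁β₁}`
(the operator `û_{α₁β₁}` acts first). -/
def wordOp (L : List Gen) : QS →ₗ[ℚ] QS :=
  L.foldl (fun f p => (uhat p.val.1 p.val.2).comp f) LinearMap.id

/-- The universal `k`-Bruhat order `≼`. -/
def uBruhat (η ζ : Sinf) : Prop :=
  ∃ u : Sinf, FinSupp u ∧ ∃ k : ℕ+, kBruhat k u (η * u) ∧ kBruhat k (η * u) (ζ * u)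

/-- `ζ` covers `η` in `≼`. -/
def uCover (η ζ : Sinf) : Prop :=
  uBruhat η ζ ∧ η ≠ ζ ∧ ∀ ξ : Sinf, uBruhat η ξ → uBruhat ξ ζ → ξ = η ∨ ξ = ζ

/-- `up(ζ) = {j : ζ⁻¹(j) < j}`. -/
def upS (ζ : Sinf) : Set ℕ+ := {j | ζ⁻¹ j < j}

/-- `dw(ζ) = {j : ζ⁻¹(j) > j}`. -/
def dwS (ζ : Sinf) : Set ℕ+ := {j | j < ζ⁻¹ j}

/-- `R_u(ζ)`: the `u`-reduced sequences for `ζ`, i.e. sequences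
`((α₁,β₁),…,(αₙ,βₙ))` with `û_{αₙβₙ}∘⋯∘û_{α₁β₁}(1) = ζ`. -/
def Rset (ζ : Sinf) : Set (List Gen) :=
  {L | wordOp L (Finsupp.single 1 1) = Finsupp.single ζ 1}

/-- `H_p(ζ)`: empty if some `pᵢ < 0`; otherwise those `u`-reduced sequences for `ζ`
whose `α`'s strictly increase within each consecutive block of sizes `p₁,…,p_r`
(indices `i, i+1` lie in the same block iff `i+1` is not a partial sum of `p`). -/
def Hset (p : List ℤ) (ζ : Sinf) : Set (List Gen) :=
  {L | L ∈ Rset ζ ∧ (∀ x ∈ p, 0 ≤ x) ∧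
    ∀ (i : ℕ) (q r : Gen), L[i]? = some q → L[i + 1]? = some r →
      (∀ t : ℕ, (p.take t).sum ≠ (i : ℤ) + 1) → q.val.1 < r.val.1}

/-- `E_p(ζ)`: as `H_p(ζ)` but with the `α`'s strictly decreasing in each block. -/
def Eset (p : List ℤ) (ζ : Sinf) : Set (List Gen) :=
  {L | L ∈ Rset ζ ∧ (∀ x ∈ p, 0 ≤ x) ∧
    ∀ (i : ℕ) (q r : Gen), L[i]? = some q → L[i + 1]? = some r →
      (∀ t : ℕ, (p.take t).sum ≠ (i : ℤ) + 1) → r.val.1 < q.val.1}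

/-- `E'_p(ζ)`: as `H_p(ζ)` but with the `β`'s strictly decreasing in each block. -/
def E'set (p : List ℤ) (ζ : Sinf) : Set (List Gen) :=
  {L | L ∈ Rset ζ ∧ (∀ x ∈ p, 0 ≤ x) ∧
    ∀ (i : ℕ) (q r : Gen), L[i]? = some q → L[i + 1]? = some r →
      (∀ t : ℕ, (p.take t).sum ≠ (i : ℤ) + 1) → r.val.2 < q.val.2}

/-- The integer sequence `λ_σ = (λ_{σ(i)} + i − σ(i))ᵢ` (here `0`-indexed). -/
def lamSeq (r : ℕ) (lam : Fin r → ℕ) (σ : Equiv.Perm (Fin r)) : List ℤ :=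
  (List.finRange r).map (fun i => (lam (σ i) : ℤ) + (i : ℤ) - ((σ i : ℕ) : ℤ))

/-- `c_λ^ζ := Σ_{σ ∈ S_r} ε(σ)·|H_{λ_σ}(ζ)|`. -/
def cCoef (r : ℕ) (lam : Fin r → ℕ) (ζ : Sinf) : ℤ :=
  ∑ σ : Equiv.Perm (Fin r),
    ((Equiv.Perm.sign σ : ℤˣ) : ℤ) * ((Hset (lamSeq r lam σ) ζ).ncard : ℤ)

/-- The free monoid-with-zero on the generators `u_{αβ}`. -/
abbrev FM : Type := WithZero (FreeMonoid Gen)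

/-- The generator `u_{αβ}` as an element of `FM`. -/
def g (α β : ℕ+) (h : α < β) : FM :=
  ((FreeMonoid.of (⟨(α, β), h⟩ : Gen) : FreeMonoid Gen) : FM)

/-- The defining relations (1)–(5) of the monoid `M`. -/
inductive MRel : FM → FM → Prop
  | r1 (α β γ δ : ℕ+) (h1 : α < β) (h2 : β < γ) (h3 : γ < δ) :
      MRel (g β γ h2 * g γ δ h3 * g α γ (h1.trans h2))
           (g β δ (h2.trans h3) * g α β h1 * g β γ h2)
  | r2 (α β γ δ : ℕ+) (h1 : α < β) (h2 : β < γ) (h3 : γ < δ) :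
      MRel (g α γ (h1.trans h2) * g γ δ h3 * g β γ h2)
           (g β γ h2 * g α β h1 * g β δ (h2.trans h3))
  | r3a (α β γ δ : ℕ+) (h1 : α < β) (h2 : γ < δ) (h : β < γ) :
      MRel (g α β h1 * g γ δ h2) (g γ δ h2 * g α β h1)
  | r3b (α β γ δ : ℕ+) (h1 : α < β) (h2 : γ < δ) (h3 : α < γ) (h4 : δ < β) :
      MRel (g α β h1 * g γ δ h2) (g γ δ h2 * g α β h1)
  | r4a (α β γ δ : ℕ+) (h1 : α ≤ β) (h2 : β < γ) (h3 : γ ≤ δ) :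
      MRel (g α γ (h1.trans_lt h2) * g β δ (h2.trans_le h3)) 0
  | r4b (α β γ δ : ℕ+) (h1 : α ≤ β) (h2 : β < γ) (h3 : γ ≤ δ) :
      MRel (g β δ (h2.trans_le h3) * g α γ (h1.trans_lt h2)) 0
  | r5a (α β γ : ℕ+) (h1 : α < β) (h2 : β < γ) :
      MRel (g β γ h2 * g α β h1 * g β γ h2) 0
  | r5b (α β γ : ℕ+) (h1 : α < β) (h2 : β < γ) :
      MRel (g α β h1 * g β γ h2 * g α β h1) 0

/-- The congruence generated by the relations (1)–(5); the monoid `M` is its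
quotient `MCon.Quotient`. -/
def MCon : Con FM := conGen MRel

/-- The word `u_{αₙβₙ}⋯u_{α₁β₁} ∈ FM` for `L = [(α₁,β₁),…,(αₙ,βₙ)]`. -/
def wordFM (L : List Gen) : FM :=
  ((FreeMonoid.ofList L.reverse : FreeMonoid Gen) : FM)

/-- The generator `u_{αβ}` in the free monoid (no zero). -/
def g3 (α β : ℕ+) (h : α < β) : FreeMonoid Gen := FreeMonoid.of ⟨(α, β), h⟩

/-- The relations (1)–(3) only, on the free monoid (no zero). -/
inductive MRel3 : FreeMonoid Gen → FreeMonoid Gen → Prop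
  | r1 (α β γ δ : ℕ+) (h1 : α < β) (h2 : β < γ) (h3 : γ < δ) :
      MRel3 (g3 β γ h2 * g3 γ δ h3 * g3 α γ (h1.trans h2))
            (g3 β δ (h2.trans h3) * g3 α β h1 * g3 β γ h2)
  | r2 (α β γ δ : ℕ+) (h1 : α < β) (h2 : β < γ) (h3 : γ < δ) :
      MRel3 (g3 α γ (h1.trans h2) * g3 γ δ h3 * g3 β γ h2)
            (g3 β γ h2 * g3 α β h1 * g3 β δ (h2.trans h3))
  | r3a (α β γ δ : ℕ+) (h1 : α < β) (h2 : γ < δ) (h : β < γ) :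
      MRel3 (g3 α β h1 * g3 γ δ h2) (g3 γ δ h2 * g3 α β h1)
  | r3b (α β γ δ : ℕ+) (h1 : α < β) (h2 : γ < δ) (h3 : α < γ) (h4 : δ < β) :
      MRel3 (g3 α β h1 * g3 γ δ h2) (g3 γ δ h2 * g3 α β h1)

/-- The word (with letters `(αᵢ,βᵢ)`) encoding a maximal chain of `[u,w]ₖ`:
there are permutations `u = u₀ <ₖ u₁ <ₖ ⋯ <ₖ uₙ = w` (each step a `k`-Bruhat
cover) with `uᵢ₊₁ = (αᵢ₊₁ βᵢ₊₁)·uᵢ`. -/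
def IsChainWord (k : ℕ+) (u w : Sinf) (L : List Gen) : Prop :=
  ∃ c : ℕ → Sinf, c 0 = u ∧ c L.length = w ∧
    ∀ (i : ℕ) (q : Gen), L[i]? = some q →
      kCover k (c i) (c (i + 1)) ∧ c (i + 1) = Equiv.swap q.val.1 q.val.2 * c i

/-- For an order-preserving `f`, the induced map on generators
`(α,β) ↦ (f α, f β)`. -/
def genMap (f : ℕ+ → ℕ+) (p : Gen) : Gen :=
  if h : f p.val.1 < f p.val.2 then ⟨(f p.val.1, f p.val.2), h⟩ else p

/-- For an order-reversing `f`, the induced map on generators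
`(α,β) ↦ (f β, f α)`. -/
def vmapGen (f : ℕ+ → ℕ+) (p : Gen) : Gen :=
  if h : f p.val.2 < f p.val.1 then ⟨(f p.val.2, f p.val.1), h⟩ else p

/-- The map `φ_a : {1,2,…} → {1,2,…}`, `i ↦ i` for `i < a` and `i ↦ i+1` for `i ≥ a`. -/
def phiF (a : ℕ+) (i : ℕ+) : ℕ+ := if i < a then i else i + 1

end

noncomputable section
open scoped Classical

namespace CMaux


def InvSet (u : Sinf) : Set (ℕ+ × ℕ+) := {p : ℕ+ × ℕ+ | p.1 < p.2 ∧ u p.2 < u p.1}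

lemma len_eq (u : Sinf) : len u = (InvSet u).ncard := rfl

lemma invSet_finite (u : Sinf) (hu : FinSupp u) : (InvSet u).Finite := by
  rcases Set.eq_empty_or_nonempty {i : ℕ+ | u i ≠ i} with h | h
  · have hid : ∀ i, u i = i := by
      intro i; by_contra hc
      exact (Set.eq_empty_iff_forall_notMem.mp h i) hc
    have : InvSet u = ∅ := by
      ext p; simp only [InvSet, Set.mem_setOf_eq, Set.mem_empty_iff_false, iff_false]
      rintro ⟨h1, h2⟩
      rw [hid p.1, hid p.2] at h2
      exact absurd h1 (not_lt.mpr h2.le)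
    rw [this]; exact Set.finite_empty
  · obtain ⟨N, hN⟩ := hu.bddAbove
    have hsupp : ∀ i : ℕ+, u i ≠ i → i ≤ N := fun i hi => hN hi
    have himg : ∀ i : ℕ+, u i ≠ i → u i ≤ N := by
      intro i hi
      refine hN ?_
      show u (u i) ≠ u i
      intro hc
      exact hi (u.injective hc)
    refine Set.Finite.subset ((Set.finite_Iic N).prod (Set.finite_Iic N)) ?_
    rintro ⟨p, q⟩ ⟨h1, h2⟩
    simp only [Set.mem_prod, Set.mem_Iic]
    constructor
    · by_contra hp
      push_neg at hp
      have hpfix : u p = p := by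
        by_contra hc; exact absurd (hsupp p hc) (not_le.mpr hp)
      have hq : u q ≠ q := by
        intro hc; rw [hc, hpfix] at h2; exact absurd h1 (not_lt.mpr h2.le)
      exact absurd (hp.trans h1) (not_lt.mpr (hsupp q hq))
    · by_contra hq
      push_neg at hq
      have hqfix : u q = q := by
        by_contra hc; exact absurd (hsupp q hc) (not_le.mpr hq)
      have hp : u p ≠ p := by
        intro hc; rw [hqfix, hc] at h2; exact absurd h1 (not_lt.mpr h2.le)
      have := himg p hp
      rw [hqfix] at h2
      exact absurd (this.trans_lt hq) (not_lt.mpr h2.le)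

variable {a b : ℕ+}

/-- For `p < q` not in the "reversed" set, the swap preserves order. -/
lemma swap_order (hab : a < b) {p q : ℕ+} (hpq : p < q)
    (h : ¬((p = a ∧ q ≤ b) ∨ (q = b ∧ a ≤ p))) :
    Equiv.swap a b p < Equiv.swap a b q := by
  push_neg at h
  by_cases hpa : p = a
  · have hbq : b < q := h.1 hpa
    have hqa : q ≠ a := by rw [hpa] at hpq; exact ne_of_gt hpq
    rw [hpa, Equiv.swap_apply_left, Equiv.swap_apply_of_ne_of_ne hqa (ne_of_gt hbq)]
    exact hbq
  · by_cases hpb : p = b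
    · have hbq : b < q := hpb ▸ hpq
      rw [hpb, Equiv.swap_apply_right,
        Equiv.swap_apply_of_ne_of_ne (ne_of_gt (hab.trans hbq)) (ne_of_gt hbq)]
      exact hab.trans hbq
    · rw [Equiv.swap_apply_of_ne_of_ne hpa hpb]
      by_cases hqa : q = a
      · rw [hqa, Equiv.swap_apply_left]
        exact (hqa ▸ hpq).trans hab
      · by_cases hqb : q = b
        · have hpa' : p < a := h.2 hqb
          rw [hqb, Equiv.swap_apply_right]
          exact hpa'
        · rw [Equiv.swap_apply_of_ne_of_ne hqa hqb]; exact hpq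

lemma R_not_image (hab : a < b) {y : ℕ+ × ℕ+} (hy : y.1 < y.2)
    (hny : ¬((y.1 = a ∧ y.2 ≤ b) ∨ (y.2 = b ∧ a ≤ y.1)))
    (hR : (Equiv.swap a b y.1 = a ∧ Equiv.swap a b y.2 ≤ b) ∨
          (Equiv.swap a b y.2 = b ∧ a ≤ Equiv.swap a b y.1)) : False := by
  rcases hR with ⟨hc1, hc2⟩ | ⟨hc1, hc2⟩
  · have hy1 : y.1 = b := by
      have := congrArg (Equiv.swap a b) hc1
      rwa [Equiv.swap_apply_self, Equiv.swap_apply_left] at this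
    have hy2b : b < y.2 := hy1 ▸ hy
    have : Equiv.swap a b y.2 = y.2 :=
      Equiv.swap_apply_of_ne_of_ne (ne_of_gt (hab.trans hy2b)) (ne_of_gt hy2b)
    rw [this] at hc2
    exact absurd hc2 (not_le.mpr hy2b)
  · have hy2 : y.2 = a := by
      have := congrArg (Equiv.swap a b) hc1
      rwa [Equiv.swap_apply_self, Equiv.swap_apply_right] at this
    have hy1a : y.1 < a := hy2 ▸ hy
    have : Equiv.swap a b y.1 = y.1 :=
      Equiv.swap_apply_of_ne_of_ne (ne_of_lt hy1a) (ne_of_lt (hy1a.trans hab))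
    rw [this] at hc2
    exact absurd hc2 (not_le.mpr hy1a)

def Fmap (a b : ℕ+) (x : ℕ+ × ℕ+) : ℕ+ × ℕ+ :=
  if (x.1 = a ∧ x.2 ≤ b) ∨ (x.2 = b ∧ a ≤ x.1) then x
  else (Equiv.swap a b x.1, Equiv.swap a b x.2)

lemma Fmap_injOn (hab : a < b) (S : Set (ℕ+ × ℕ+)) (hS : ∀ x ∈ S, x.1 < x.2) :
    Set.InjOn (Fmap a b) S := by
  intro x hx y hy hxy
  unfold Fmap at hxy
  split_ifs at hxy with h1 h2 h2
  · exact hxy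
  · exfalso
    refine R_not_image hab (hS y hy) h2 ?_
    rw [hxy] at h1
    exact h1
  · exfalso
    refine R_not_image hab (hS x hx) h1 ?_
    rw [← hxy] at h2
    exact h2
  · have e1 : Equiv.swap a b x.1 = Equiv.swap a b y.1 := congrArg Prod.fst hxy
    have e2 : Equiv.swap a b x.2 = Equiv.swap a b y.2 := congrArg Prod.snd hxy
    exact Prod.ext ((Equiv.swap a b).injective e1) ((Equiv.swap a b).injective e2)

lemma finSupp_mul_swap (u : Sinf) (hu : FinSupp u) : FinSupp (u * Equiv.swap a b) := by
  have : {i : ℕ+ | (u * Equiv.swap a b) i ≠ i} ⊆ {i : ℕ+ | u i ≠ i} ∪ {a, b} := by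
    intro i hi
    simp only [Set.mem_setOf_eq] at hi
    by_cases hia : i = a
    · right; simp [hia]
    · by_cases hib : i = b
      · right; simp [hib]
      · left
        rw [Equiv.Perm.mul_apply, Equiv.swap_apply_of_ne_of_ne hia hib] at hi
        exact hi
  exact Set.Finite.subset (hu.union ((Set.finite_singleton b).insert a)) this

/-- C1: a cover has increasing values at the swapped positions. -/
lemma cover_lt (u : Sinf) (hu : FinSupp u) (hab : a < b)
    (h : len (u * Equiv.swap a b) = len u + 1) : u a < u b := by
  by_contra hc
  have hne : u b ≠ u a := fun hc' => (ne_of_lt hab) (u.injective hc'.symm)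
  have hba : u b < u a := lt_of_le_of_ne (not_lt.mp hc) hne
  set v := u * Equiv.swap a b with hv
  have hvap : ∀ p, v p = u (Equiv.swap a b p) := fun p => Equiv.Perm.mul_apply u _ p
  have hfinU := invSet_finite u hu
  have hmem : ∀ x ∈ InvSet v, Fmap a b x ∈ InvSet u \ {(a, b)} := by
    rintro ⟨p, q⟩ ⟨hpq, hinv⟩
    simp only at hpq hinv
    rw [hvap, hvap] at hinv
    unfold Fmap
    split_ifs with hR
    · rcases hR with ⟨hpa, hqb⟩ | ⟨hqb, hap⟩
      · simp only at hpa hqb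
        have hqb' : q < b := by
          rcases lt_or_eq_of_le hqb with h' | h'
          · exact h'
          · rw [hpa, h', Equiv.swap_apply_right, Equiv.swap_apply_left] at hinv
            exact absurd hinv (not_lt.mpr hba.le)
        have hqa : q ≠ a := by rw [hpa] at hpq; exact ne_of_gt hpq
        rw [hpa, Equiv.swap_apply_left, Equiv.swap_apply_of_ne_of_ne hqa (ne_of_lt hqb')] at hinv
        refine ⟨⟨hpq, ?_⟩, ?_⟩
        · rw [hpa]; exact hinv.trans hba
        · simp only [Set.mem_singleton_iff, Prod.mk.injEq, not_and]
          intro _; exact ne_of_lt hqb'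
      · simp only at hqb hap
        by_cases hpa : p = a
        · rw [hpa, hqb, Equiv.swap_apply_right, Equiv.swap_apply_left] at hinv
          exact absurd hinv (not_lt.mpr hba.le)
        · rw [hqb, Equiv.swap_apply_right,
            Equiv.swap_apply_of_ne_of_ne hpa (by rw [hqb] at hpq; exact ne_of_lt hpq)] at hinv
          refine ⟨⟨hpq, ?_⟩, ?_⟩
          · rw [hqb]; exact hba.trans hinv
          · simp only [Set.mem_singleton_iff, Prod.mk.injEq, not_and]
            intro hc'; exact absurd hc' hpa
    · have hord := swap_order hab hpq hR
      refine ⟨⟨hord, hinv⟩, ?_⟩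
      simp only [Set.mem_singleton_iff, Prod.mk.injEq, not_and]
      intro h1 h2
      have hp : p = b := by
        have := congrArg (Equiv.swap a b) h1
        rwa [Equiv.swap_apply_self, Equiv.swap_apply_left] at this
      have hq : q = a := by
        have := congrArg (Equiv.swap a b) h2
        rwa [Equiv.swap_apply_self, Equiv.swap_apply_right] at this
      rw [hp, hq] at hpq
      exact absurd (hab.trans hpq) (lt_irrefl _)
  have hinj : Set.InjOn (Fmap a b) (InvSet v) :=
    Fmap_injOn hab _ (fun x hx => hx.1)
  have hcard : (InvSet v).ncard ≤ (InvSet u \ {(a, b)}).ncard :=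
    Set.ncard_le_ncard_of_injOn _ hmem hinj hfinU.diff
  have habU : ((a, b) : ℕ+ × ℕ+) ∈ InvSet u := ⟨hab, hba⟩
  have hlt : (InvSet u \ {(a, b)}).ncard < (InvSet u).ncard :=
    Set.ncard_diff_singleton_lt_of_mem habU hfinU
  rw [len_eq, len_eq] at h
  omega

/-- C2: a cover has no intermediate position with intermediate value. -/
lemma cover_nomid (u : Sinf) (hu : FinSupp u) (hab : a < b)
    (h : len (u * Equiv.swap a b) = len u + 1) :
    ∀ p, a < p → p < b → ¬(u a < u p ∧ u p < u b) := by
  rintro c hac hcb ⟨hcv1, hcv2⟩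
  have huab : u a < u b := hcv1.trans hcv2
  set v := u * Equiv.swap a b with hv
  have hvap : ∀ p, v p = u (Equiv.swap a b p) := fun p => Equiv.Perm.mul_apply u _ p
  have hfinU := invSet_finite u hu
  have hfinV : (InvSet v).Finite := invSet_finite v (finSupp_mul_swap u hu)
  have hcna : c ≠ a := ne_of_gt hac
  have hcnb : c ≠ b := ne_of_lt hcb
  have hmem : ∀ x ∈ InvSet u, Fmap a b x ∈ InvSet v \ {(a, b), (a, c)} := by
    rintro ⟨p, q⟩ ⟨hpq, hinv⟩
    simp only at hpq hinv
    unfold Fmap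
    split_ifs with hR
    · rcases hR with ⟨hpa, hqb⟩ | ⟨hqb, hap⟩
      · simp only at hpa hqb
        have hqb' : q < b := by
          rcases lt_or_eq_of_le hqb with h' | h'
          · exact h'
          · rw [hpa, h'] at hinv
            exact absurd hinv (not_lt.mpr huab.le)
        have hqa : q ≠ a := by rw [hpa] at hpq; exact ne_of_gt hpq
        refine ⟨⟨hpq, ?_⟩, ?_⟩
        · rw [hvap, hvap, hpa, Equiv.swap_apply_left,
            Equiv.swap_apply_of_ne_of_ne hqa (ne_of_lt hqb')]
          rw [hpa] at hinv
          exact hinv.trans huab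
        · simp only [Set.mem_insert_iff, Set.mem_singleton_iff, Prod.mk.injEq, not_or, not_and]
          constructor
          · intro _; exact ne_of_lt hqb'
          · intro _ hqc
            rw [hpa, hqc] at hinv
            exact absurd hinv (not_lt.mpr hcv1.le)
      · simp only at hqb hap
        by_cases hpa : p = a
        · rw [hpa, hqb] at hinv
          exact absurd hinv (not_lt.mpr huab.le)
        · refine ⟨⟨hpq, ?_⟩, ?_⟩
          · rw [hvap, hvap, hqb, Equiv.swap_apply_right,
              Equiv.swap_apply_of_ne_of_ne hpa (by rw [hqb] at hpq; exact ne_of_lt hpq)]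
            rw [hqb] at hinv
            exact huab.trans hinv
          · simp only [Set.mem_insert_iff, Set.mem_singleton_iff, Prod.mk.injEq, not_or, not_and]
            exact ⟨fun hc' => absurd hc' hpa, fun hc' => absurd hc' hpa⟩
    · have hord := swap_order hab hpq hR
      refine ⟨⟨hord, ?_⟩, ?_⟩
      · rw [hvap, hvap, Equiv.swap_apply_self, Equiv.swap_apply_self]
        exact hinv
      · simp only [Set.mem_insert_iff, Set.mem_singleton_iff, Prod.mk.injEq, not_or, not_and]
        constructor
        · intro h1 h2
          have hp : p = b := by
            have := congrArg (Equiv.swap a b) h1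
            rwa [Equiv.swap_apply_self, Equiv.swap_apply_left] at this
          have hq : q = a := by
            have := congrArg (Equiv.swap a b) h2
            rwa [Equiv.swap_apply_self, Equiv.swap_apply_right] at this
          rw [hp, hq] at hpq
          exact absurd (hab.trans hpq) (lt_irrefl _)
        · intro h1 h2
          have hp : p = b := by
            have := congrArg (Equiv.swap a b) h1
            rwa [Equiv.swap_apply_self, Equiv.swap_apply_left] at this
          have hq : q = c := by
            have := congrArg (Equiv.swap a b) h2
            rw [Equiv.swap_apply_self] at this
            rw [this, Equiv.swap_apply_of_ne_of_ne hcna hcnb]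
          rw [hp, hq] at hpq
          exact absurd (hpq.trans hcb) (lt_irrefl _)
  have hinj : Set.InjOn (Fmap a b) (InvSet u) :=
    Fmap_injOn hab _ (fun x hx => hx.1)
  have hcard : (InvSet u).ncard ≤ (InvSet v \ {(a, b), (a, c)}).ncard :=
    Set.ncard_le_ncard_of_injOn _ hmem hinj hfinV.diff
  have habV : ((a, b) : ℕ+ × ℕ+) ∈ InvSet v := by
    refine ⟨hab, ?_⟩
    rw [hvap, hvap, Equiv.swap_apply_left, Equiv.swap_apply_right]
    exact huab
  have hacV : ((a, c) : ℕ+ × ℕ+) ∈ InvSet v := by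
    refine ⟨hac, ?_⟩
    rw [hvap, hvap, Equiv.swap_apply_left, Equiv.swap_apply_of_ne_of_ne hcna hcnb]
    exact hcv2
  have hsub : ({(a, b), (a, c)} : Set (ℕ+ × ℕ+)) ⊆ InvSet v := by
    rintro x (hx | hx)
    · rw [hx]; exact habV
    · rw [Set.mem_singleton_iff] at hx; rw [hx]; exact hacV
  have hpair : ({(a, b), (a, c)} : Set (ℕ+ × ℕ+)).ncard = 2 := by
    rw [Set.ncard_pair]
    simp only [ne_eq, Prod.mk.injEq, not_and]
    intro _; exact ne_of_gt hcb
  have := Set.ncard_diff_add_ncard_of_subset hsub hfinV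
  rw [len_eq, len_eq] at h
  omega

section Chain

variable {k : ℕ+} {n : ℕ} {c : ℕ → Sinf} {A B : ℕ → ℕ+}

lemma step_other (hap : ∀ i < n, c (i+1) = c i * Equiv.swap (A i) (B i))
    {i : ℕ} (hi : i < n) {p : ℕ+} (h1 : p ≠ A i) (h2 : p ≠ B i) :
    c (i+1) p = c i p := by
  rw [hap i hi, Equiv.Perm.mul_apply, Equiv.swap_apply_of_ne_of_ne h1 h2]

lemma step_A (hap : ∀ i < n, c (i+1) = c i * Equiv.swap (A i) (B i))
    {i : ℕ} (hi : i < n) : c (i+1) (A i) = c i (B i) := by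
  rw [hap i hi, Equiv.Perm.mul_apply, Equiv.swap_apply_left]

lemma step_B (hap : ∀ i < n, c (i+1) = c i * Equiv.swap (A i) (B i))
    {i : ℕ} (hi : i < n) : c (i+1) (B i) = c i (A i) := by
  rw [hap i hi, Equiv.Perm.mul_apply, Equiv.swap_apply_right]

lemma stepL (hap : ∀ i < n, c (i+1) = c i * Equiv.swap (A i) (B i))
    (hbk : ∀ i < n, k < B i)
    (hC1 : ∀ i < n, c i (A i) < c i (B i))
    {i : ℕ} (hi : i < n) {p : ℕ+} (hp : p ≤ k) : c i p ≤ c (i+1) p := by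
  by_cases hpA : p = A i
  · rw [hpA, step_A hap hi]
    exact (hC1 i hi).le
  · rw [step_other hap hi hpA (ne_of_lt (lt_of_le_of_lt hp (hbk i hi)))]

lemma stepR (hap : ∀ i < n, c (i+1) = c i * Equiv.swap (A i) (B i))
    (hak : ∀ i < n, A i ≤ k)
    (hC1 : ∀ i < n, c i (A i) < c i (B i))
    {i : ℕ} (hi : i < n) {p : ℕ+} (hp : k < p) : c (i+1) p ≤ c i p := by
  by_cases hpB : p = B i
  · rw [hpB, step_B hap hi]
    exact (hC1 i hi).le
  · rw [step_other hap hi (ne_of_gt (lt_of_le_of_lt (hak i hi) hp)) hpB]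

lemma monoL (hap : ∀ i < n, c (i+1) = c i * Equiv.swap (A i) (B i))
    (hbk : ∀ i < n, k < B i)
    (hC1 : ∀ i < n, c i (A i) < c i (B i))
    {p : ℕ+} (hp : p ≤ k) :
    ∀ j, j ≤ n → ∀ i, i ≤ j → c i p ≤ c j p := by
  intro j
  induction j with
  | zero => intro _ i hi; rw [Nat.le_zero.mp hi]
  | succ m ihm =>
    intro hm i hi
    by_cases h' : i = m + 1
    · rw [h']
    · exact (ihm (by omega) i (by omega)).trans (stepL hap hbk hC1 (by omega) hp)

lemma monoR (hap : ∀ i < n, c (i+1) = c i * Equiv.swap (A i) (B i))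
    (hak : ∀ i < n, A i ≤ k)
    (hC1 : ∀ i < n, c i (A i) < c i (B i))
    {p : ℕ+} (hp : k < p) :
    ∀ j, j ≤ n → ∀ i, i ≤ j → c j p ≤ c i p := by
  intro j
  induction j with
  | zero => intro _ i hi; rw [Nat.le_zero.mp hi]
  | succ m ihm =>
    intro hm i hi
    by_cases h' : i = m + 1
    · rw [h']
    · exact (stepR hap hak hC1 (by omega) hp).trans (ihm (by omega) i (by omega))

lemma constL (hap : ∀ i < n, c (i+1) = c i * Equiv.swap (A i) (B i))
    (hak : ∀ i < n, A i ≤ k)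
    (hbk : ∀ i < n, k < B i)
    (hC1 : ∀ i < n, c i (A i) < c i (B i))
    {p : ℕ+} (hp : p ≤ k) :
    ∀ j, j ≤ n → ∀ i, i ≤ j → (∀ l, i ≤ l → l < j → A l ≠ p) → c j p = c i p := by
  intro j
  induction j with
  | zero => intro _ i hi _; rw [Nat.le_zero.mp hi]
  | succ m ihm =>
    intro hm i hi hAl
    by_cases h' : i = m + 1
    · rw [h']
    · have h1 : c (m+1) p = c m p :=
        step_other hap (by omega) (fun hc => hAl m (by omega) (by omega) hc.symm)
          (ne_of_lt (lt_of_le_of_lt hp (hbk m (by omega))))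
      rw [h1]
      exact ihm (by omega) i (by omega) (fun l hl1 hl2 => hAl l hl1 (by omega))

lemma constR (hap : ∀ i < n, c (i+1) = c i * Equiv.swap (A i) (B i))
    (hak : ∀ i < n, A i ≤ k)
    (hbk : ∀ i < n, k < B i)
    (hC1 : ∀ i < n, c i (A i) < c i (B i))
    {p : ℕ+} (hp : k < p) :
    ∀ j, j ≤ n → ∀ i, i ≤ j → (∀ l, i ≤ l → l < j → B l ≠ p) → c j p = c i p := by
  intro j
  induction j with
  | zero => intro _ i hi _; rw [Nat.le_zero.mp hi]
  | succ m ihm =>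
    intro hm i hi hBl
    by_cases h' : i = m + 1
    · rw [h']
    · have h1 : c (m+1) p = c m p :=
        step_other hap (by omega) (ne_of_gt (lt_of_le_of_lt (hak m (by omega)) hp))
          (fun hc => hBl m (by omega) (by omega) hc.symm)
      rw [h1]
      exact ihm (by omega) i (by omega) (fun l hl1 hl2 => hBl l hl1 (by omega))

lemma existsL (hap : ∀ i < n, c (i+1) = c i * Equiv.swap (A i) (B i))
    (hak : ∀ i < n, A i ≤ k)
    (hbk : ∀ i < n, k < B i)
    (hC1 : ∀ i < n, c i (A i) < c i (B i))
    {p : ℕ+} (hp : p ≤ k) {i : ℕ} (hi : i ≤ n) (hne : c i p ≠ c n p) :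
    ∃ j, i ≤ j ∧ j < n ∧ A j = p := by
  by_contra hcon
  push_neg at hcon
  exact hne (constL hap hak hbk hC1 hp n le_rfl i hi
    (fun l hl1 hl2 => hcon l hl1 hl2)).symm

lemma firstR (hap : ∀ i < n, c (i+1) = c i * Equiv.swap (A i) (B i))
    (hak : ∀ i < n, A i ≤ k)
    (hbk : ∀ i < n, k < B i)
    (hC1 : ∀ i < n, c i (A i) < c i (B i))
    {p : ℕ+} (hpk : k < p) {i : ℕ} (hi : i ≤ n) (hne : c i p ≠ c n p) :
    ∃ j, i ≤ j ∧ j < n ∧ B j = p ∧ c j p = c i p := by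
  have hex : ∃ j, i ≤ j ∧ j < n ∧ B j = p := by
    by_contra hcon
    push_neg at hcon
    exact hne (constR hap hak hbk hC1 hpk n le_rfl i hi
      (fun l hl1 hl2 => hcon l hl1 hl2)).symm
  refine ⟨Nat.find hex, (Nat.find_spec hex).1, (Nat.find_spec hex).2.1,
    (Nat.find_spec hex).2.2, ?_⟩
  refine constR hap hak hbk hC1 hpk (Nat.find hex) (le_of_lt (Nat.find_spec hex).2.1) i
    (Nat.find_spec hex).1 ?_
  intro l hl1 hl2 hcon
  exact Nat.find_min hex hl2 ⟨hl1, hl2.trans (Nat.find_spec hex).2.1, hcon⟩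


lemma persist (hap : ∀ i < n, c (i+1) = c i * Equiv.swap (A i) (B i))
    (hak : ∀ i < n, A i ≤ k)
    (hC1 : ∀ i < n, c i (A i) < c i (B i))
    (hC2 : ∀ i < n, ∀ x, A i < x → x < B i → ¬(c i (A i) < c i x ∧ c i x < c i (B i)))
    {p r : ℕ+} (hkp : k < p) (hpr : p < r) :
    ∀ m, m ≤ n → ∀ s, s ≤ m → c s p < c s r → c m p < c m r := by
  intro m
  induction m with
  | zero => intro _ s hs h; rw [Nat.le_zero.mp hs] at h; exact h
  | succ m ihm =>
    intro hm s hs h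
    by_cases hsm : s = m + 1
    · rw [hsm] at h; exact h
    · have h1 : c m p < c m r := ihm (by omega) s (by omega) h
      have hm' : m < n := by omega
      have hpA : p ≠ A m := ne_of_gt (lt_of_le_of_lt (hak m hm') hkp)
      have hrA : r ≠ A m := ne_of_gt (lt_of_le_of_lt (hak m hm') (hkp.trans hpr))
      by_cases hBp : B m = p
      · have e1 : c (m+1) p = c m (A m) := by
          have := step_B hap hm'; rwa [hBp] at this
        have e2 : c (m+1) r = c m r :=
          step_other hap hm' hrA (by rw [hBp]; exact ne_of_gt hpr)
        rw [e1, e2]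
        calc c m (A m) < c m (B m) := hC1 m hm'
        _ = c m p := by rw [hBp]
        _ < c m r := h1
      · by_cases hBr : B m = r
        · have e1 : c (m+1) p = c m p :=
            step_other hap hm' hpA (by rw [hBr]; exact ne_of_lt hpr)
          have e2 : c (m+1) r = c m (A m) := by
            have := step_B hap hm'; rwa [hBr] at this
          have hmid := hC2 m hm' p (lt_of_le_of_lt (hak m hm') hkp)
            (by rw [hBr]; exact hpr)
          have h2 : c m p < c m (B m) := by rw [hBr]; exact h1
          have h3 : ¬ c m (A m) < c m p := fun hcon => hmid ⟨hcon, h2⟩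
          have h4 : c m p ≠ c m (A m) := fun hcon => hpA ((c m).injective hcon)
          rw [e1, e2]
          exact lt_of_le_of_ne (not_lt.mp h3) h4
        · rw [step_other hap hm' hpA (fun hc => hBp hc.symm),
            step_other hap hm' hrA (fun hc => hBr hc.symm)]
          exact h1

end Chain

end CMaux
end

/-- A maximal chain `u = c 0 <ₖ c 1 <ₖ ⋯ <ₖ c n = w` of
`[u,w]ₖ`, with `c (i+1) = (c i)·(A i, B i)`, is the CM-chain (each step
satisfies conditions I and II of the recursive definition) iff it has no
inversions. -/
theorem CM_chain_iff_no_inversions (k : ℕ+) (u w : Sinf) (hu : FinSupp u)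
    (huw : kBruhat k u w) (hne : u ≠ w)
    (n : ℕ) (c : ℕ → Sinf) (A B : ℕ → ℕ+)
    (hc0 : c 0 = u) (hcn : c n = w)
    (hstep : ∀ i < n, kCover k (c i) (c (i + 1)) ∧ A i ≤ k ∧ k < B i ∧
      c (i + 1) = c i * Equiv.swap (A i) (B i)) :
    -- no inversions
    (∀ i j : ℕ, i < j → j < n →
      ¬(w (A i) < w (A j) ∨ (w (A i) = w (A j) ∧ w (B j) < w (B i))))
    ↔
    -- each step satisfies conditions I and II of the CM-chain recursion
    (∀ i < n,
      (c i (A i) < w (A i) ∧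
        ∀ j : ℕ+, j ≤ k → c i j < w j → w j ≤ w (A i)) ∧
      (c i (A i) < c i (B i) ∧ w (B i) ≤ c i (A i) ∧
        ∀ j : ℕ+, k < j → c i (A i) < c i j → w j ≤ c i (A i) → w (B i) ≤ w j)) := by
  subst hc0
  subst hcn
  clear hne huw
  have hap : ∀ i < n, c (i+1) = c i * Equiv.swap (A i) (B i) := fun i hi => (hstep i hi).2.2.2
  have hak : ∀ i < n, A i ≤ k := fun i hi => (hstep i hi).2.1
  have hbk : ∀ i < n, k < B i := fun i hi => (hstep i hi).2.2.1
  have hlen : ∀ i < n, len (c (i+1)) = len (c i) + 1 := fun i hi => (hstep i hi).1.1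
  have hFS : ∀ i, i ≤ n → FinSupp (c i) := by
    intro i
    induction i with
    | zero => intro _; exact hu
    | succ m ihm =>
      intro hm
      rw [hap m (by omega)]
      exact CMaux.finSupp_mul_swap _ (ihm (by omega))
  have hAB : ∀ i < n, A i < B i := fun i hi => lt_of_le_of_lt (hak i hi) (hbk i hi)
  have hC1 : ∀ i < n, c i (A i) < c i (B i) := by
    intro i hi
    refine CMaux.cover_lt (c i) (hFS i (le_of_lt hi)) (hAB i hi) ?_
    rw [← hap i hi]
    exact hlen i hi
  have hC2 : ∀ i < n, ∀ x, A i < x → x < B i →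
      ¬(c i (A i) < c i x ∧ c i x < c i (B i)) := by
    intro i hi
    refine CMaux.cover_nomid (c i) (hFS i (le_of_lt hi)) (hAB i hi) ?_
    rw [← hap i hi]
    exact hlen i hi
  constructor
  · -- no inversions → CM conditions
    intro hNI i hi
    have hImax : ∀ p : ℕ+, p ≤ k → c i p < c n p → c n p ≤ c n (A i) := by
      intro p hp hlt
      obtain ⟨j, hij, hjn, hAj⟩ :=
        CMaux.existsL hap hak hbk hC1 hp (le_of_lt hi) (ne_of_lt hlt)
      rcases eq_or_lt_of_le hij with h' | h'
      · rw [← hAj, ← h']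
      · have h2 := hNI i j h' hjn
        rw [not_or] at h2
        rw [← hAj]
        exact not_lt.mp h2.1
    have keyII : ∀ d i, i < n → n - i ≤ d →
        ∀ q : ℕ+, k < q → c i (A i) < c i q → c n q ≤ c i (A i) →
          c n (B i) ≤ c n q := by
      intro d
      induction d with
      | zero => intro i hi hd; omega
      | succ d ihd =>
        intro i hi hd q hqk hq1 hq2
        by_cases hqB : q = B i
        · rw [hqB]
        · have hqA : A i < q := lt_of_le_of_lt (hak i hi) hqk
          rcases lt_or_gt_of_ne (fun hc : B i = q => hqB hc.symm) with hgt | hlt'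
          · -- B i < q : persistence
            have h2 : c (i+1) q = c i q :=
              CMaux.step_other hap hi (ne_of_gt hqA) hqB
            have h3 : c (i+1) (B i) < c (i+1) q := by
              rw [CMaux.step_B hap hi, h2]; exact hq1
            exact (CMaux.persist hap hak hC1 hC2 (hbk i hi) hgt n le_rfl (i+1)
              (Nat.succ_le_of_lt hi) h3).le
          · -- q < B i
            have hmid := hC2 i hi q hqA hlt'
            have hBq : c i (B i) < c i q := by
              have h1 : ¬ c i q < c i (B i) := fun hcon => hmid ⟨hq1, hcon⟩
              have h2 : c i (B i) ≠ c i q := fun hcon => hqB ((c i).injective hcon).symm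
              exact lt_of_le_of_ne (not_lt.mp h1) h2
            have hq1' : c (i+1) q = c i q :=
              CMaux.step_other hap hi (ne_of_gt hqA) hqB
            by_cases hin : i + 1 = n
            · exfalso
              have : c n q = c i q := by rw [← hin]; exact hq1'
              rw [this] at hq2
              exact absurd hq1 (not_lt.mpr hq2)
            · have hin' : i + 1 < n := lt_of_le_of_ne (Nat.succ_le_of_lt hi) hin
              by_cases hA : A (i+1) = A i
              · -- same-position block: use IH at i+1
                have e1 : c (i+1) (A (i+1)) = c i (B i) := by
                  rw [hA]; exact CMaux.step_A hap hi
                have hq1'' : c (i+1) (A (i+1)) < c (i+1) q := by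
                  rw [e1, hq1']; exact hBq
                have hq2'' : c n q ≤ c (i+1) (A (i+1)) := by
                  rw [e1]; exact hq2.trans (hC1 i hi).le
                have hIH := ihd (i+1) hin' (by omega) q hqk hq1'' hq2''
                have hni := hNI i (i+1) (Nat.lt_succ_self i) hin'
                rw [not_or] at hni
                have heq : c n (A i) = c n (A (i+1)) := by rw [hA]
                have h5 : ¬ c n (B (i+1)) < c n (B i) := fun hcon => hni.2 ⟨heq, hcon⟩
                exact le_trans (not_lt.mp h5) hIH
              · -- different position: no such candidate can exist
                exfalso
                have hni := hNI i (i+1) (Nat.lt_succ_self i) hin'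
                rw [not_or] at hni
                have hA1 : c n (A (i+1)) < c n (A i) := by
                  have hle : c n (A (i+1)) ≤ c n (A i) := not_lt.mp hni.1
                  have hne' : c n (A (i+1)) ≠ c n (A i) :=
                    fun hcon => hA ((c n).injective hcon)
                  exact lt_of_le_of_ne hle hne'
                have hAl : ∀ l, i + 1 ≤ l → l < n → A l ≠ A i := by
                  intro l hl1 hl2 hcon
                  rcases eq_or_lt_of_le hl1 with h' | h'
                  · rw [← h'] at hcon; exact hA hcon
                  · have h6 := hNI (i+1) l h' hl2
                    rw [not_or] at h6
                    have h7 := not_lt.mp h6.1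
                    rw [hcon] at h7
                    exact absurd (lt_of_le_of_lt h7 hA1) (lt_irrefl _)
                have hwAi : c n (A i) = c i (B i) := by
                  have h8 : c n (A i) = c (i+1) (A i) :=
                    CMaux.constL hap hak hbk hC1 (hak i hi) n le_rfl (i+1)
                      (Nat.succ_le_of_lt hi) hAl
                  rw [h8]
                  exact CMaux.step_A hap hi
                have hqdrop : c (i+1) q ≠ c n q := by
                  rw [hq1']
                  intro hcon
                  rw [← hcon] at hq2
                  exact absurd hq1 (not_lt.mpr hq2)
                obtain ⟨j, hj1, hj2, hBj, hconst⟩ :=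
                  CMaux.firstR hap hak hbk hC1 hqk (le_of_lt hin') hqdrop
                have e2 : c (j+1) (A j) = c i q := by
                  have h9 := CMaux.step_A hap hj2
                  rw [h9, hBj, hconst, hq1']
                have e3 : c (j+1) (A j) ≤ c n (A j) :=
                  CMaux.monoL hap hbk hC1 (hak j hj2) n le_rfl (j+1)
                    (Nat.succ_le_of_lt hj2)
                have e4 : c n (A j) ≤ c n (A i) := by
                  have h10 := hNI i j (by omega) hj2
                  rw [not_or] at h10
                  exact not_lt.mp h10.1
                rw [e2] at e3
                rw [hwAi] at e4
                exact absurd (lt_of_le_of_lt (e3.trans e4) hBq) (lt_irrefl _)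
    refine ⟨⟨?_, hImax⟩, hC1 i hi, ?_, ?_⟩
    · have h1 : c (i+1) (A i) ≤ c n (A i) :=
        CMaux.monoL hap hbk hC1 (hak i hi) n le_rfl (i+1) (Nat.succ_le_of_lt hi)
      rw [CMaux.step_A hap hi] at h1
      exact lt_of_lt_of_le (hC1 i hi) h1
    · have h1 : c n (B i) ≤ c (i+1) (B i) :=
        CMaux.monoR hap hak hC1 (hbk i hi) n le_rfl (i+1) (Nat.succ_le_of_lt hi)
      rw [CMaux.step_B hap hi] at h1
      exact h1
    · intro q hqk hq1 hq2
      exact keyII (n - i) i hi le_rfl q hqk hq1 hq2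
  · -- CM conditions → no inversions
    intro hRHS i j hij hjn
    have hin : i < n := hij.trans hjn
    have hii := hRHS i hin
    have hAjle : c n (A j) ≤ c n (A i) := by
      have h1 : c i (A j) < c n (A j) := by
        have e1 : c i (A j) ≤ c j (A j) :=
          CMaux.monoL hap hbk hC1 (hak j hjn) j (le_of_lt hjn) i hij.le
        have e2 : c (j+1) (A j) ≤ c n (A j) :=
          CMaux.monoL hap hbk hC1 (hak j hjn) n le_rfl (j+1) (Nat.succ_le_of_lt hjn)
        rw [CMaux.step_A hap hjn] at e2
        exact lt_of_le_of_lt e1 (lt_of_lt_of_le (hC1 j hjn) e2)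
      exact hii.1.2 (A j) (hak j hjn) h1
    rintro (hlt | ⟨heq, hblt⟩)
    · exact absurd hlt (not_lt.mpr hAjle)
    · have hAij : A i = A j := (c n).injective heq
      by_cases hcase : c n (B j) ≤ c i (A i)
      · have hq1 : c i (A i) < c i (B j) := by
          have h1 : c j (B j) ≤ c i (B j) :=
            CMaux.monoR hap hak hC1 (hbk j hjn) j (le_of_lt hjn) i hij.le
          have h2 : c j (A j) < c j (B j) := hC1 j hjn
          have h3 : c i (A i) ≤ c j (A j) := by
            rw [hAij]
            exact CMaux.monoL hap hbk hC1 (hak j hjn) j (le_of_lt hjn) i hij.le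
          exact lt_of_le_of_lt h3 (lt_of_lt_of_le h2 h1)
        exact absurd hblt
          (not_lt.mpr (hii.2.2.2 (B j) (hbk j hjn) hq1 hcase))
      · push_neg at hcase
        exact absurd hblt (not_lt.mpr (hii.2.2.1.trans hcase.le))
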